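/- Let Λ ⊆ ℝ^n be a lattice, Φ an expanding injective endomorphism of ℝ^n with Φ(Λ) ⊆ Λ, and V ⊆ ℝ^n a set tiling ℝ^n by Λ with V ⊆ Φ(V) and V = −V. Suppose there are a vector norm ‖·‖ on ℝ^n and reals r, R > 0 with {x : ‖x‖ ≤ r} ⊆ V ⊆ {x : ‖x‖ ≤ R} and ‖Φ^{−1}‖ < r/R for the induced operator norm. Let w be a positive integer with ‖Φ^{−1}‖^w < (1/2)(r/R − ‖Φ^{−1}‖), and let D = D• ∪ {0} be a tiling-based digit set (D• ⊆ {α ∈ Λ : Φ^{−w}(α) ∈ V}, one representative per residue class mod Φ^w(Λ) not in Φ(Λ)). If D is a w-NADS, then for every α ∈ Λ the D-w-NAF expansion of α is optimal: its Hamming weight is at most the Hamming weight of any word over D with value α. -/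

import Mathlib

set_option linter.unusedSectionVars false
set_option maxHeartbeats 1000000


open scoped Classical

namespace WnafAux

/-- Bundled context for the w-NAF optimality proof. -/
structure Ctx (E : Type*) [NormedAddCommGroup E] [NormedSpace ℝ E]
    [FiniteDimensional ℝ E] where
  Λ : Set E
  Φ : E ≃ₗ[ℝ] E
  V : Set E
  Dbul : Set E
  q : ℝ
  r : ℝ
  R : ℝ
  w : ℕ
  hw : 1 ≤ w
  hr : 0 < r
  hrR : r ≤ R
  hq0 : 0 ≤ q
  hqrR : q < r / R
  hbound : q ^ w < 1 / 2 * (r / R - q)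
  hqn : ∀ x : E, ‖Φ.symm x‖ ≤ q * ‖x‖
  hz : (0 : E) ∈ Λ
  hadd : ∀ {x y : E}, x ∈ Λ → y ∈ Λ → x + y ∈ Λ
  hneg : ∀ {x : E}, x ∈ Λ → -x ∈ Λ
  hphi : ∀ {x : E}, x ∈ Λ → Φ x ∈ Λ
  hsep : ∃ ε > 0, ∀ x ∈ Λ, x ≠ 0 → ε ≤ ‖x‖
  hrV : {x : E | ‖x‖ ≤ r} ⊆ V
  hVR : V ⊆ {x : E | ‖x‖ ≤ R}
  hVPhi : V ⊆ ⇑Φ '' V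
  hVdisj : ∀ z ∈ Λ, z ≠ 0 → ∀ x ∈ V, x - z ∈ V → x ∈ frontier V
  hDL : Dbul ⊆ Λ
  hDV : ∀ δ ∈ Dbul, (Φ ^ w).symm δ ∈ V
  hDnot : ∀ δ ∈ Dbul, δ ∉ ⇑Φ '' Λ
  hDrep : ∀ α ∈ Λ, α ∉ ⇑Φ '' Λ → ∃! δ, δ ∈ Dbul ∧ α - δ ∈ ⇑(Φ ^ w) '' Λ


variable {E : Type*} [NormedAddCommGroup E] [NormedSpace ℝ E]

/-- Hamming weight of a word. -/
noncomputable def wt (l : List E) : ℕ := (l.filter (fun a => a ≠ 0)).length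

@[simp] lemma wt_nil : wt ([] : List E) = 0 := rfl

lemma wt_cons (a : E) (l : List E) :
    wt (a :: l) = (if a = 0 then 0 else 1) + wt l := by
  by_cases h : a = 0
  · simp [wt, List.filter_cons, h]
  · simp [wt, List.filter_cons, h, Nat.add_comm]

@[simp] lemma wt_cons_zero (l : List E) : wt ((0 : E) :: l) = wt l := by
  simp [wt_cons]

lemma wt_append (l₁ l₂ : List E) : wt (l₁ ++ l₂) = wt l₁ + wt l₂ := by
  simp [wt, List.filter_append]

@[simp] lemma wt_replicate_zero (k : ℕ) : wt (List.replicate k (0 : E)) = 0 := by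
  induction k with
  | zero => rfl
  | succ k ih => simpa [List.replicate_succ] using ih

lemma wt_take_drop (k : ℕ) (l : List E) :
    wt l = wt (l.take k) + wt (l.drop k) := by
  conv_lhs => rw [← List.take_append_drop k l]
  exact wt_append _ _

lemma getD_replicate_zero (k i : ℕ) : (List.replicate k (0 : E)).getD i 0 = 0 := by
  by_cases h : i < k
  · rw [List.getD_eq_getElem _ _ (by simpa using h)]
    simp
  · exact List.getD_eq_default _ _ (by simpa using le_of_not_gt h)

lemma getD_append_left {l₁ l₂ : List E} {i : ℕ} (h : i < l₁.length) :
    (l₁ ++ l₂).getD i 0 = l₁.getD i 0 := by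
  rw [List.getD_eq_getElem _ _ (by simp; omega), List.getD_eq_getElem _ _ h]
  exact List.getElem_append_left h

lemma getD_append_right {l₁ l₂ : List E} {i : ℕ} (h : l₁.length ≤ i) :
    (l₁ ++ l₂).getD i 0 = l₂.getD (i - l₁.length) 0 := by
  by_cases h2 : i - l₁.length < l₂.length
  · rw [List.getD_eq_getElem _ _ (by simp; omega), List.getD_eq_getElem _ _ h2]
    exact List.getElem_append_right h
  · rw [List.getD_eq_default _ _ (by simp; omega), List.getD_eq_default _ _ (by omega)]

lemma getD_take {l : List E} {k i : ℕ} :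
    (l.take k).getD i 0 = if i < k then l.getD i 0 else 0 := by
  split_ifs with h
  · by_cases h2 : i < l.length
    · rw [List.getD_eq_getElem _ _ (by simp; omega), List.getD_eq_getElem _ _ h2]
      simp
    · rw [List.getD_eq_default _ _ (by simp; omega), List.getD_eq_default _ _ (by omega)]
  · exact List.getD_eq_default _ _ (by simp; omega)

lemma getD_drop {l : List E} {k i : ℕ} :
    (l.drop k).getD i 0 = l.getD (k + i) 0 := by
  by_cases h : k + i < l.length
  · rw [List.getD_eq_getElem _ _ (by simp; omega), List.getD_eq_getElem _ _ h]
    simp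
  · rw [List.getD_eq_default _ _ (by simp; omega), List.getD_eq_default _ _ (by omega)]


lemma getD_ofFn (ℓ : ℕ) (f : Fin ℓ → E) (i : ℕ) :
    (List.ofFn f).getD i 0 = if h : i < ℓ then f ⟨i, h⟩ else 0 := by
  split_ifs with h
  · rw [List.getD_eq_getElem _ _ (by simpa using h)]
    simp
  · exact List.getD_eq_default _ _ (by simpa using le_of_not_gt h)


namespace Ctx

variable {E : Type*} [NormedAddCommGroup E] [NormedSpace ℝ E] [FiniteDimensional ℝ E]
variable (c : Ctx E)

/-! ### values of words -/

/-- The value of a word (least significant digit first). -/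
noncomputable def val : List E → E
  | [] => 0
  | a :: l => a + c.Φ (val l)

@[simp] lemma val_nil : c.val [] = 0 := rfl

@[simp] lemma val_cons (a : E) (l : List E) : c.val (a :: l) = a + c.Φ (c.val l) := rfl

/-! ### elementary facts -/

lemma hR : (0 : ℝ) < c.R := lt_of_lt_of_le c.hr c.hrR

lemma hq1 : c.q < 1 :=
  lt_of_lt_of_le c.hqrR ((div_le_one c.hR).mpr c.hrR)

lemma hsub {x y : E} (hx : x ∈ c.Λ) (hy : y ∈ c.Λ) : x - y ∈ c.Λ := by
  simpa [sub_eq_add_neg] using c.hadd hx (c.hneg hy)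

lemma mul_apply (f g : E ≃ₗ[ℝ] E) (x : E) : (f * g) x = f (g x) := rfl

lemma pow_succ_apply (m : ℕ) (x : E) : (c.Φ ^ (m + 1)) x = (c.Φ ^ m) (c.Φ x) := by
  rw [pow_succ]; rfl

lemma pow_succ_apply' (m : ℕ) (x : E) : (c.Φ ^ (m + 1)) x = c.Φ ((c.Φ ^ m) x) := by
  rw [pow_succ']; rfl

@[simp] lemma pow_zero_apply (x : E) : (c.Φ ^ (0 : ℕ)) x = x := rfl

@[simp] lemma symm_one_apply (x : E) : (1 : E ≃ₗ[ℝ] E).symm x = x := rfl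

lemma symm_pow (m : ℕ) : (c.Φ ^ m).symm = c.Φ.symm ^ m := by
  have : (c.Φ ^ m).symm = (c.Φ ^ m)⁻¹ := rfl
  rw [this, ← inv_pow]; rfl

lemma symm_pow_succ_apply (m : ℕ) (x : E) :
    (c.Φ ^ (m + 1)).symm x = (c.Φ ^ m).symm (c.Φ.symm x) := by
  rw [c.symm_pow, c.symm_pow, pow_succ]; rfl

lemma symm_pow_succ_apply' (m : ℕ) (x : E) :
    (c.Φ ^ (m + 1)).symm x = c.Φ.symm ((c.Φ ^ m).symm x) := by
  rw [c.symm_pow, c.symm_pow, pow_succ']; rfl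

@[simp] lemma symm_pow_zero_apply (x : E) : ((c.Φ ^ (0 : ℕ)).symm) x = x := rfl

lemma symm_pow_add_apply (m k : ℕ) (x : E) :
    (c.Φ ^ (m + k)).symm x = (c.Φ ^ m).symm ((c.Φ ^ k).symm x) := by
  rw [c.symm_pow, c.symm_pow, c.symm_pow, pow_add]; rfl

lemma hphipow (m : ℕ) {x : E} (hx : x ∈ c.Λ) : (c.Φ ^ m) x ∈ c.Λ := by
  induction m with
  | zero => simpa using hx
  | succ m ih => rw [c.pow_succ_apply']; exact c.hphi ih

lemma qnorm_pow (m : ℕ) (x : E) : ‖(c.Φ ^ m).symm x‖ ≤ c.q ^ m * ‖x‖ := by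
  induction m with
  | zero => simp
  | succ m ih =>
      rw [c.symm_pow_succ_apply']
      calc ‖c.Φ.symm ((c.Φ ^ m).symm x)‖ ≤ c.q * ‖(c.Φ ^ m).symm x‖ := c.hqn _
      _ ≤ c.q * (c.q ^ m * ‖x‖) := by
            exact mul_le_mul_of_nonneg_left ih c.hq0
      _ = c.q ^ (m + 1) * ‖x‖ := by ring

lemma memPhi_iff {x : E} : x ∈ ⇑c.Φ '' c.Λ ↔ c.Φ.symm x ∈ c.Λ := by
  constructor
  · rintro ⟨y, hy, rfl⟩; simpa using hy
  · intro h; exact ⟨c.Φ.symm x, h, by simp⟩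

lemma memPhiPow_iff {m : ℕ} {x : E} : x ∈ ⇑(c.Φ ^ m) '' c.Λ ↔ (c.Φ ^ m).symm x ∈ c.Λ := by
  constructor
  · rintro ⟨y, hy, rfl⟩; simpa using hy
  · intro h; exact ⟨(c.Φ ^ m).symm x, h, by simp⟩

/-! ### arithmetic facts -/

lemma rho_lt_r : c.q * c.R + 2 * (c.q ^ c.w * c.R) < c.r := by
  have h2 : 2 * c.q ^ c.w < c.r / c.R - c.q := by linarith [c.hbound]
  have := mul_lt_mul_of_pos_right (show c.q + 2 * c.q ^ c.w < c.r / c.R by linarith) c.hR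
  calc c.q * c.R + 2 * (c.q ^ c.w * c.R) = (c.q + 2 * c.q ^ c.w) * c.R := by ring
  _ < c.r / c.R * c.R := this
  _ = c.r := div_mul_cancel₀ c.r (ne_of_gt c.hR)

lemma qpow_le_q : c.q ^ c.w ≤ c.q := by
  calc c.q ^ c.w ≤ c.q ^ 1 := pow_le_pow_of_le_one c.hq0 (le_of_lt c.hq1) c.hw
  _ = c.q := pow_one _

lemma qpow_nonneg (m : ℕ) : 0 ≤ c.q ^ m := pow_nonneg c.hq0 m

/-! ### geometric facts -/

lemma small_mem_int {x : E} (hx : ‖x‖ < c.r) : x ∈ interior c.V := by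
  have hball : Metric.ball (0 : E) c.r ⊆ c.V := by
    intro y hy
    exact c.hrV (le_of_lt (by simpa using hy))
  exact interior_maximal hball Metric.isOpen_ball (by simpa using hx)

lemma symm_int {x : E} (hx : x ∈ interior c.V) : c.Φ.symm x ∈ interior c.V := by
  have himg : c.Φ.symm '' interior c.V = interior (c.Φ.symm '' c.V) :=
    c.Φ.symm.toContinuousLinearEquiv.toHomeomorph.image_interior c.V
  have hsub : c.Φ.symm '' c.V ⊆ c.V := by
    intro y ⟨v, hv, hvy⟩
    obtain ⟨u, hu, hu2⟩ := c.hVPhi hv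
    rw [← hvy, ← hu2]; simpa using hu
  have : c.Φ.symm x ∈ interior (c.Φ.symm '' c.V) := himg ▸ ⟨x, hx, rfl⟩
  exact interior_mono hsub this

lemma symm_pow_int (m : ℕ) {x : E} (hx : x ∈ interior c.V) :
    (c.Φ ^ m).symm x ∈ interior c.V := by
  induction m with
  | zero => simpa using hx
  | succ m ih => rw [c.symm_pow_succ_apply']; exact c.symm_int ih

/-! ### carries -/

/-- Admissible carries. -/
def carr (u : E) : Prop :=
  u ∈ c.Λ ∧ (u = 0 ∨ u ∈ c.Dbul ∨ (c.Φ ^ c.w).symm u ∈ interior c.V)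

lemma carr_zero : c.carr 0 := ⟨c.hz, Or.inl rfl⟩

lemma carr_of_digit {u : E} (hu : u ∈ c.Dbul) : c.carr u := ⟨c.hDL hu, Or.inr (Or.inl hu)⟩

lemma carr_mem {u : E} (hu : c.carr u) : u ∈ c.Λ := hu.1

lemma carr_norm {u : E} (hu : c.carr u) : ‖(c.Φ ^ c.w).symm u‖ ≤ c.R := by
  rcases hu.2 with h | h | h
  · simp [h, le_of_lt c.hR]
  · exact c.hVR (c.hDV u h)
  · exact c.hVR (interior_subset h)

lemma carr_of_small {u : E} (hu : u ∈ c.Λ)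
    (hn : ‖(c.Φ ^ c.w).symm u‖ ≤ c.q * c.R + 2 * (c.q ^ c.w * c.R)) : c.carr u :=
  ⟨hu, Or.inr (Or.inr (c.small_mem_int (lt_of_le_of_lt hn c.rho_lt_r)))⟩

/-- Lemma 6.4: a small lattice element not in `Φ(Λ)` is a digit. -/
lemma lem64 {u : E} (hu : u ∈ c.Λ) (hnot : u ∉ ⇑c.Φ '' c.Λ)
    (hint : (c.Φ ^ c.w).symm u ∈ interior c.V) : u ∈ c.Dbul := by
  obtain ⟨δ, ⟨hδD, z, hz, hzeq⟩, -⟩ := c.hDrep u hu hnot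
  -- z ∈ Λ, (Φ^w) z = u - δ
  by_cases hz0 : z = 0
  · have huδ : u = δ := by
      have h2 := hzeq
      rw [hz0] at h2
      simp at h2
      have := sub_eq_zero.mp h2.symm
      exact this
    exact huδ ▸ hδD
  · exfalso
    have hx : (c.Φ ^ c.w).symm u ∈ c.V := interior_subset hint
    have hxz : (c.Φ ^ c.w).symm u - z ∈ c.V := by
      have hzv : z = (c.Φ ^ c.w).symm (u - δ) := by rw [← hzeq]; simp
      have : (c.Φ ^ c.w).symm u - z = (c.Φ ^ c.w).symm δ := by
        rw [hzv, map_sub]; abel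
      rw [this]
      exact c.hDV δ hδD
    have hfr := c.hVdisj z hz hz0 _ hx hxz
    rw [frontier, Set.mem_diff] at hfr
    exact hfr.2 hint

lemma carr_digit {u : E} (hu : c.carr u) (hnot : u ∉ ⇑c.Φ '' c.Λ) (hu0 : u ≠ 0) :
    u ∈ c.Dbul := by
  rcases hu.2 with h | h | h
  · exact absurd h hu0
  · exact h
  · exact c.lem64 hu.1 hnot h

lemma carr_symm {u : E} (hu : c.carr u) (hmem : u ∈ ⇑c.Φ '' c.Λ) : c.carr (c.Φ.symm u) := by
  refine ⟨c.memPhi_iff.mp hmem, ?_⟩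
  rcases hu.2 with h | h | h
  · left; simp [h]
  · exact absurd hmem (c.hDnot u h)
  · right; right
    have h4 : (c.Φ ^ c.w).symm (c.Φ.symm u) = (c.Φ ^ (c.w + 1)).symm u :=
      (c.symm_pow_succ_apply c.w u).symm
    rw [h4, c.symm_pow_succ_apply']
    exact c.symm_int h

/-- Every nonzero carry has a weight-one expansion. -/
lemma weight_one {u : E} (hu : c.carr u) (hu0 : u ≠ 0) :
    ∃ (m : ℕ) (d : E), d ∈ c.Dbul ∧ u = (c.Φ ^ m) d := by
  obtain ⟨ε, hε, hsep⟩ := c.hsep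
  have hQ : ∃ m, u ∉ ⇑(c.Φ ^ m) '' c.Λ := by
    obtain ⟨m, hm⟩ := exists_pow_lt_of_lt_one (by positivity : (0:ℝ) < ε / (‖u‖ + 1)) c.hq1
    refine ⟨m, fun hmem => ?_⟩
    obtain ⟨v, hv, hveq⟩ := hmem
    have hv0 : v ≠ 0 := by rintro rfl; simp at hveq; exact hu0 hveq.symm
    have h1 : ε ≤ ‖v‖ := hsep v hv hv0
    have hvsymm : v = (c.Φ ^ m).symm u := by rw [← hveq]; simp
    have h2 : ‖v‖ ≤ c.q ^ m * ‖u‖ := by rw [hvsymm]; exact c.qnorm_pow m u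
    have hun : (0:ℝ) < ‖u‖ + 1 := by positivity
    have : c.q ^ m * ‖u‖ < ε := by
      calc c.q ^ m * ‖u‖ ≤ c.q ^ m * (‖u‖ + 1) := by nlinarith [c.qpow_nonneg m]
      _ < ε / (‖u‖ + 1) * (‖u‖ + 1) := by nlinarith
      _ = ε := by field_simp
    linarith
  obtain ⟨m₀, hm₀, hmin⟩ : ∃ m₀, (u ∉ ⇑(c.Φ ^ m₀) '' c.Λ) ∧
      ∀ k, k < m₀ → u ∈ ⇑(c.Φ ^ k) '' c.Λ :=
    ⟨Nat.find hQ, Nat.find_spec hQ, fun k hk => not_not.mp (Nat.find_min hQ hk)⟩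
  have hm₀pos : 0 < m₀ := by
    rcases Nat.eq_zero_or_pos m₀ with h | h
    · exfalso; apply hm₀; rw [h]; exact ⟨u, hu.1, by simp⟩
    · exact h
  obtain ⟨m, rfl⟩ : ∃ m, m₀ = m + 1 := ⟨m₀ - 1, (Nat.succ_pred_eq_of_pos hm₀pos).symm⟩
  obtain ⟨v, hv, hveq⟩ := hmin m (Nat.lt_succ_self m)
  have hvnot : v ∉ ⇑c.Φ '' c.Λ := by
    rintro ⟨x, hx, rfl⟩
    apply hm₀
    refine ⟨x, hx, ?_⟩
    rw [← hveq, c.pow_succ_apply]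
  have hv0 : v ≠ 0 := by rintro rfl; simp at hveq; exact hu0 hveq.symm
  have hvsymm : v = (c.Φ ^ m).symm u := by rw [← hveq]; simp
  have hcv : c.carr v := by
    refine ⟨hv, ?_⟩
    rcases hu.2 with h | h | h
    · exact absurd h hu0
    · right; left
      have hmz : m = 0 := by
        by_contra hm
        obtain ⟨k, hk⟩ : ∃ k, m = k + 1 :=
          ⟨m - 1, (Nat.succ_pred_eq_of_pos (Nat.pos_of_ne_zero hm)).symm⟩
        apply c.hDnot u h
        refine ⟨(c.Φ ^ k) v, c.hphipow k hv, ?_⟩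
        rw [← hveq, hk, c.pow_succ_apply']
      rw [hmz] at hveq
      simp at hveq
      rw [hveq]; exact h
    · right; right
      rw [hvsymm]
      have : (c.Φ ^ c.w).symm ((c.Φ ^ m).symm u) = (c.Φ ^ m).symm ((c.Φ ^ c.w).symm u) := by
        rw [← c.symm_pow_add_apply, ← c.symm_pow_add_apply, Nat.add_comm]
      rw [this]
      exact c.symm_pow_int m h
  exact ⟨m, v, c.carr_digit hcv hvnot hv0, hveq.symm⟩

/-! ### words over digits -/

/-- All letters are digits or zero. -/
def dok (l : List E) : Prop := ∀ a ∈ l, a = 0 ∨ a ∈ c.Dbul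

/-- The `w`-NAF condition. -/
def naf (l : List E) : Prop :=
  ∀ i k : ℕ, 0 < k → k < c.w → l.getD i 0 ≠ 0 → l.getD (i + k) 0 = 0

lemma dok_nil : c.dok [] := by intro a ha; simp at ha

lemma dok_cons {a : E} {l : List E} (h : c.dok (a :: l)) : c.dok l :=
  fun x hx => h x (List.mem_cons_of_mem a hx)

lemma dok_head {a : E} {l : List E} (h : c.dok (a :: l)) : a = 0 ∨ a ∈ c.Dbul :=
  h a List.mem_cons_self

lemma dok_cons_iff {a : E} {l : List E} :
    c.dok (a :: l) ↔ (a = 0 ∨ a ∈ c.Dbul) ∧ c.dok l := by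
  constructor
  · exact fun h => ⟨c.dok_head h, c.dok_cons h⟩
  · rintro ⟨h1, h2⟩ x hx
    rcases List.mem_cons.mp hx with rfl | hx
    · exact h1
    · exact h2 x hx

lemma dok_drop (k : ℕ) {l : List E} (h : c.dok l) : c.dok (l.drop k) :=
  fun x hx => h x (List.mem_of_mem_drop hx)

lemma dok_take (k : ℕ) {l : List E} (h : c.dok l) : c.dok (l.take k) :=
  fun x hx => h x (List.mem_of_mem_take hx)

lemma dok_append {l₁ l₂ : List E} (h1 : c.dok l₁) (h2 : c.dok l₂) : c.dok (l₁ ++ l₂) := by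
  intro x hx
  rcases List.mem_append.mp hx with h | h
  · exact h1 x h
  · exact h2 x h

lemma dok_replicate (k : ℕ) : c.dok (List.replicate k (0 : E)) := by
  intro x hx
  left; exact List.eq_of_mem_replicate hx

lemma val_mem {l : List E} (h : c.dok l) : c.val l ∈ c.Λ := by
  induction l with
  | nil => simpa using c.hz
  | cons a l ih =>
      rw [c.val_cons]
      have ha : a ∈ c.Λ := by
        rcases c.dok_head h with rfl | ha
        · exact c.hz
        · exact c.hDL ha
      exact c.hadd ha (c.hphi (ih (c.dok_cons h)))

lemma val_split (k : ℕ) (l : List E) :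
    c.val l = c.val (l.take k) + (c.Φ ^ k) (c.val (l.drop k)) := by
  induction k generalizing l with
  | zero => simp
  | succ k ih =>
      cases l with
      | nil => simp
      | cons a l =>
          simp only [List.take_succ_cons, List.drop_succ_cons, c.val_cons]
          rw [ih l, map_add, c.pow_succ_apply']
          abel

lemma val_zero_of_getD {l : List E} (h : ∀ j : ℕ, l.getD j 0 = 0) : c.val l = 0 := by
  induction l with
  | nil => rfl
  | cons a l ih =>
      have ha : a = 0 := h 0
      have : ∀ j : ℕ, l.getD j 0 = 0 := fun j => h (j + 1)
      rw [c.val_cons, ih this, ha]; simp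

lemma val_allzero {l : List E} (h : ∀ a ∈ l, a = 0) : c.val l = 0 := by
  apply c.val_zero_of_getD
  intro j
  by_cases hj : j < l.length
  · rw [List.getD_eq_getElem _ _ hj]; exact h _ (List.getElem_mem hj)
  · exact List.getD_eq_default _ _ (le_of_not_gt hj)

lemma wt_allzero {l : List E} (h : ∀ a ∈ l, a = 0) : wt l = 0 := by
  induction l with
  | nil => rfl
  | cons a l ih =>
      rw [wt_cons, h a List.mem_cons_self, if_pos rfl, ih (fun x hx => h x (List.mem_cons_of_mem a hx))]

lemma val_replicate_append (k : ℕ) (l : List E) :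
    c.val (List.replicate k (0 : E) ++ l) = (c.Φ ^ k) (c.val l) := by
  induction k with
  | zero => simp
  | succ k ih =>
      rw [List.replicate_succ, List.cons_append, c.val_cons, ih, c.pow_succ_apply']
      simp

lemma val_single {l : List E} (i : ℕ) (h : ∀ j : ℕ, j ≠ i → l.getD j 0 = 0) :
    c.val l = (c.Φ ^ i) (l.getD i 0) := by
  induction l generalizing i with
  | nil => simp [List.getD]
  | cons a l ih =>
      cases i with
      | zero =>
          have : ∀ j : ℕ, l.getD j 0 = 0 := fun j => h (j + 1) (Nat.succ_ne_zero j)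
          rw [c.val_cons, c.val_zero_of_getD this]
          simp [List.getD_cons_zero]
      | succ i =>
          have ha : a = 0 := h 0 (by omega)
          have : ∀ j : ℕ, j ≠ i → l.getD j 0 = 0 := by
            intro j hj
            have := h (j + 1) (by omega)
            simpa using this
          rw [c.val_cons, ih i this, ha, c.pow_succ_apply']
          simp [List.getD_cons_succ]

/-! ### NAF lemmas -/

lemma naf_nil : c.naf [] := by intro i k _ _ h; simp [List.getD] at h

lemma naf_cons_zero {l : List E} (h : c.naf l) : c.naf ((0 : E) :: l) := by
  intro i k hk hkw htrig
  cases i with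
  | zero => simp [List.getD_cons_zero] at htrig
  | succ i =>
      have : (i + 1) + k = (i + k) + 1 := by omega
      rw [this, List.getD_cons_succ]
      exact h i k hk hkw (by simpa [List.getD_cons_succ] using htrig)

lemma naf_tail {a : E} {l : List E} (h : c.naf (a :: l)) : c.naf l := by
  intro i k hk hkw htrig
  have := h (i + 1) k hk hkw (by simpa [List.getD_cons_succ] using htrig)
  simpa [show (i+1)+k = (i+k)+1 by omega, List.getD_cons_succ] using this

lemma naf_drop (k : ℕ) {l : List E} (h : c.naf l) : c.naf (l.drop k) := by
  intro i m hm hmw htrig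
  rw [getD_drop]
  rw [getD_drop] at htrig
  have := h (k + i) m hm hmw htrig
  simpa [show k + i + m = k + (i + m) by omega] using this

lemma naf_replicate (k : ℕ) {l : List E} (h : c.naf l) :
    c.naf (List.replicate k (0 : E) ++ l) := by
  induction k with
  | zero => simpa using h
  | succ k ih =>
      rw [List.replicate_succ, List.cons_append]
      exact c.naf_cons_zero ih

lemma naf_singleton (d : E) : c.naf [d] := by
  intro i k hk hkw htrig
  have : i = 0 := by
    by_contra h
    have : 1 ≤ i := Nat.one_le_iff_ne_zero.mpr h
    rw [List.getD_eq_default _ _ (by simpa using this)] at htrig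
    exact htrig rfl
  subst this
  exact List.getD_eq_default _ _ (by simp; omega)

lemma naf_emit (d : E) {l : List E} (h : c.naf l) :
    c.naf (d :: (List.replicate (c.w - 1) (0 : E) ++ l)) := by
  intro i k hk hkw htrig
  cases i with
  | zero =>
      -- target at position k with 1 ≤ k ≤ w-1 : inside the replicate block
      rw [show (0 + k) = (k - 1) + 1 by omega, List.getD_cons_succ]
      rw [getD_append_left (by simp; omega)]
      exact getD_replicate_zero _ _
  | succ i =>
      rw [show (i + 1) + k = (i + k) + 1 by omega, List.getD_cons_succ]
      rw [List.getD_cons_succ] at htrig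
      -- i is a position in (replicate ++ l) with nonzero letter: must be in l
      have hil : c.w - 1 ≤ i := by
        by_contra hcon
        rw [getD_append_left (by simp; omega), getD_replicate_zero] at htrig
        exact htrig rfl
      rw [getD_append_right (by simp; omega)] at htrig
      rw [getD_append_right (by simp; omega)]
      simp only [List.length_replicate] at htrig ⊢
      have := h (i - (c.w - 1)) k hk hkw htrig
      rwa [show i + k - (c.w - 1) = (i - (c.w -1)) + k by omega]

lemma naf_window {l : List E} (h : c.naf l) (h0 : l.getD 0 0 ≠ 0) :
    ∀ j : ℕ, 0 < j → j < c.w → l.getD j 0 = 0 := by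
  intro j hj hjw
  simpa using h 0 j hj hjw h0

/-- In any NAF word, the first `w` letters contain at most one nonzero letter;
the value of the prefix is `Φ^i` of that letter. -/
lemma naf_take_w {l : List E} (hnaf : c.naf l) :
    (∀ j, j < c.w → l.getD j 0 = 0) ∨
    (∃ i, i < c.w ∧ l.getD i 0 ≠ 0 ∧ (∀ j, j < c.w → j ≠ i → l.getD j 0 = 0) ∧
      c.val (l.take c.w) = (c.Φ ^ i) (l.getD i 0)) := by
  by_cases hall : ∀ j, j < c.w → l.getD j 0 = 0
  · exact Or.inl hall
  · right
    push_neg at hall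
    obtain ⟨j₀, hj₀w, hj₀⟩ := hall
    have hex : ∃ i, i < c.w ∧ l.getD i 0 ≠ 0 := ⟨j₀, hj₀w, hj₀⟩
    classical
    obtain ⟨i, ⟨hiw, hi0⟩, hmin⟩ : ∃ i, (i < c.w ∧ l.getD i 0 ≠ 0) ∧
        ∀ j, (j < c.w ∧ l.getD j 0 ≠ 0) → i ≤ j := by
      refine ⟨Nat.find hex, Nat.find_spec hex, fun j hj => Nat.find_le hj⟩
    have hzero : ∀ j, j < c.w → j ≠ i → l.getD j 0 = 0 := by
      intro j hjw hji
      rcases Nat.lt_or_ge j i with h | h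
      · by_contra hc
        exact absurd (hmin j ⟨hjw, hc⟩) (by omega)
      · have : 0 < j - i := by omega
        have := hnaf i (j - i) this (by omega) hi0
        rwa [show i + (j - i) = j by omega] at this
    refine ⟨i, hiw, hi0, hzero, ?_⟩
    have : ∀ j : ℕ, j ≠ i → (l.take c.w).getD j 0 = 0 := by
      intro j hj
      rw [getD_take]
      split_ifs with h
      · exact hzero j h hj
      · rfl
    rw [c.val_single i this, getD_take, if_pos hiw]

/-- Dropping forced leading zeros. -/
lemma dropz (m : ℕ) {l : List E} (hdok : c.dok l) (hval : c.val l ∈ ⇑(c.Φ ^ m) '' c.Λ) :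
    c.val (l.drop m) = (c.Φ ^ m).symm (c.val l) ∧ wt (l.drop m) = wt l ∧ c.dok (l.drop m) := by
  induction m generalizing l with
  | zero => exact ⟨by simp, rfl, hdok⟩
  | succ m ih =>
      obtain ⟨z, hz, hzeq⟩ := hval
      cases l with
      | nil =>
          refine ⟨?_, rfl, c.dok_nil⟩
          simp
      | cons a l =>
          have ha : a = 0 := by
            rcases c.dok_head hdok with h | h
            · exact h
            · exfalso
              apply c.hDnot a h
              refine ⟨(c.Φ ^ m) z - c.val l, c.hsub (c.hphipow m hz) (c.val_mem (c.dok_cons hdok)), ?_⟩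
              rw [map_sub]
              have : c.Φ ((c.Φ ^ m) z) = (c.Φ ^ (m+1)) z := (c.pow_succ_apply' m z).symm
              rw [this, hzeq, c.val_cons]
              abel
          subst ha
          have hvl : c.val l ∈ ⇑(c.Φ ^ m) '' c.Λ := by
            refine ⟨z, hz, ?_⟩
            have h1 : c.val ((0:E) :: l) = c.Φ (c.val l) := by rw [c.val_cons]; simp
            have h2 : c.Φ ((c.Φ ^ m) z) = c.Φ (c.val l) := by
              rw [← h1, ← hzeq, c.pow_succ_apply']
            exact c.Φ.injective h2
          obtain ⟨e1, e2, e3⟩ := ih (c.dok_cons hdok) hvl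
          refine ⟨?_, ?_, ?_⟩
          · rw [List.drop_succ_cons, e1]
            have h1 : c.val ((0:E) :: l) = c.Φ (c.val l) := by rw [c.val_cons]; simp
            rw [h1, c.symm_pow_succ_apply]
            simp
          · rw [List.drop_succ_cons, e2, wt_cons_zero]
          · rw [List.drop_succ_cons]; exact e3

/-! ### more helpers -/

lemma pow_add_apply (a b : ℕ) (x : E) : (c.Φ ^ (a + b)) x = (c.Φ ^ a) ((c.Φ ^ b) x) := by
  rw [pow_add]; rfl

lemma symm_pow_cancel {i : ℕ} (hi : i ≤ c.w) (x : E) :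
    (c.Φ ^ c.w).symm ((c.Φ ^ i) x) = (c.Φ ^ (c.w - i)).symm x := by
  have h : c.w = (c.w - i) + i := by omega
  rw [h, c.symm_pow_add_apply]
  simp

lemma pow_pred_apply (x : E) : c.Φ ((c.Φ ^ (c.w - 1)) x) = (c.Φ ^ c.w) x := by
  conv_rhs => rw [show c.w = (c.w - 1) + 1 from by have := c.hw; omega]
  rw [c.pow_succ_apply']

lemma digit_norm {d : E} (hd : d ∈ c.Dbul) : ‖(c.Φ ^ c.w).symm d‖ ≤ c.R :=
  c.hVR (c.hDV d hd)

lemma digit_ne_zero {d : E} (hd : d ∈ c.Dbul) : d ≠ 0 := by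
  rintro rfl
  exact c.hDnot 0 hd ⟨0, c.hz, by simp⟩

lemma one_le_wt_of_getD {l : List E} {i : ℕ} (h : l.getD i 0 ≠ 0) : 1 ≤ wt l := by
  have hi : i < l.length := by
    by_contra hc
    exact h (List.getD_eq_default _ _ (le_of_not_gt hc))
  rw [List.getD_eq_getElem _ _ hi] at h
  have hmem : l[i] ∈ l.filter (fun a => a ≠ 0) :=
    List.mem_filter.mpr ⟨List.getElem_mem hi, by simpa using h⟩
  have := List.length_pos_iff.mpr (List.ne_nil_of_mem hmem)
  exact this

lemma allzero_of_getD {l : List E} (h : ∀ j : ℕ, l.getD j 0 = 0) : ∀ a ∈ l, a = 0 := by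
  intro a ha
  obtain ⟨i, hi, rfl⟩ := List.mem_iff_getElem.mp ha
  have := h i
  rwa [List.getD_eq_getElem _ _ hi] at this

lemma dok_getD {l : List E} (hl : c.dok l) (i : ℕ) :
    l.getD i 0 = 0 ∨ l.getD i 0 ∈ c.Dbul := by
  by_cases hi : i < l.length
  · rw [List.getD_eq_getElem _ _ hi]
    exact hl _ (List.getElem_mem hi)
  · left; exact List.getD_eq_default _ _ (le_of_not_gt hi)

lemma if_le_one (x : E) : (if x = 0 then 0 else 1) ≤ 1 := by
  split_ifs <;> omega

/-- Base case: expansions of a carry alone. -/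
lemma carry_base {u : E} (hu : c.carr u) :
    ∃ σ : List E, c.dok σ ∧ c.naf σ ∧ c.val σ = u ∧
      wt σ ≤ (if u = 0 then 0 else 1) := by
  by_cases hu0 : u = 0
  · exact ⟨[], c.dok_nil, c.naf_nil, by simp [hu0], by simp⟩
  · obtain ⟨m, d, hd, hud⟩ := c.weight_one hu hu0
    refine ⟨List.replicate m 0 ++ [d], ?_, ?_, ?_, ?_⟩
    · exact c.dok_append (c.dok_replicate m) (by intro x hx; simp at hx; subst hx; right; exact hd)
    · exact c.naf_replicate m (c.naf_singleton d)
    · rw [c.val_replicate_append, hud]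
      congr 1
      simp [c.val_cons]
    · rw [wt_append, wt_replicate_zero, if_neg hu0]
      simp [wt_cons, c.digit_ne_zero hd]

/-- The head of a NAF word with nonzero head sums the whole first window. -/
lemma val_take_head {θ₀ : E} {t : List E} (hnaf : c.naf (θ₀ :: t)) (h0 : θ₀ ≠ 0) :
    c.val ((θ₀ :: t).take c.w) = θ₀ ∧ (∀ a ∈ t.take (c.w - 1), a = 0) := by
  have h00 : (θ₀ :: t).getD 0 0 ≠ 0 := by simpa using h0
  have hwin := c.naf_window hnaf h00
  constructor
  · have hz : ∀ j : ℕ, j ≠ 0 → ((θ₀ :: t).take c.w).getD j 0 = 0 := by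
      intro j hj
      rw [getD_take]
      split_ifs with h
      · exact hwin j (Nat.pos_of_ne_zero hj) h
      · rfl
    rw [c.val_single 0 hz, getD_take, if_pos (by have := c.hw; omega : 0 < c.w)]
    simp
  · intro a ha
    obtain ⟨i, hi, rfl⟩ := List.mem_iff_getElem.mp ha
    have hi2 : i < c.w - 1 := by
      have := hi
      simp [List.length_take] at this
      omega
    have : t.getD i 0 = 0 := by
      have := hwin (i + 1) (by omega) (by omega)
      simpa [List.getD_cons_succ] using this
    have h5 : (t.take (c.w - 1)).getD i 0 = 0 := by
      rw [getD_take, if_pos hi2]; exact this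
    rwa [List.getD_eq_getElem _ _ hi] at h5

/-- The main construction: absorbing an admissible carry into a NAF word. -/
lemma carry : ∀ (N : ℕ) (θ : List E), θ.length ≤ N → c.dok θ → c.naf θ →
    ∀ u : E, c.carr u →
    ∃ σ : List E, c.dok σ ∧ c.naf σ ∧ c.val σ = c.val θ + u ∧
      wt σ ≤ wt θ + (if u = 0 then 0 else 1) := by
  intro N
  induction N with
  | zero =>
      intro θ hlen hdok hnaf u hu
      have hθ : θ = [] := List.length_eq_zero_iff.mp (Nat.le_zero.mp hlen)
      subst hθ
      obtain ⟨σ, h1, h2, h3, h4⟩ := c.carry_base hu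
      exact ⟨σ, h1, h2, by simpa using h3, by simpa using h4⟩
  | succ N ih =>
      intro θ hlen hdok hnaf u hu
      by_cases hγ0 : c.val θ + u = 0
      · exact ⟨[], c.dok_nil, c.naf_nil, by simp [hγ0], by simp⟩
      cases θ with
      | nil =>
          obtain ⟨σ, h1, h2, h3, h4⟩ := c.carry_base hu
          exact ⟨σ, h1, h2, by simpa using h3, by simpa using h4⟩
      | cons θ₀ t =>
          have hγΛ : c.val (θ₀ :: t) + u ∈ c.Λ := c.hadd (c.val_mem hdok) (c.carr_mem hu)
          have hw1 : c.w = (c.w - 1) + 1 := by have := c.hw; omega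
          have htlen : t.length ≤ N := by simpa using hlen
          have hpostlen : (t.drop (c.w - 1)).length ≤ N :=
            le_trans (by rw [List.length_drop]; omega) htlen
          have hdokt := c.dok_cons hdok
          have hnaft := c.naf_tail hnaf
          have hdokpost := c.dok_drop (c.w - 1) hdokt
          have hnafpost := c.naf_drop (c.w - 1) hnaft
          have hdrop : (θ₀ :: t).drop c.w = t.drop (c.w - 1) := by
            conv_lhs => rw [hw1]
            exact List.drop_succ_cons
          have hsplit : c.val (θ₀ :: t) =
              c.val ((θ₀ :: t).take c.w) + (c.Φ ^ c.w) (c.val (t.drop (c.w - 1))) := by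
            conv_lhs => rw [c.val_split c.w (θ₀ :: t)]
            rw [hdrop]
          have hT₂Λ : c.val (t.drop (c.w - 1)) ∈ c.Λ := c.val_mem hdokpost
          by_cases hγΦ : c.val (θ₀ :: t) + u ∈ ⇑c.Φ '' c.Λ
          · -- value divisible by Φ
            by_cases hθ₀ : θ₀ = 0
            · -- step a zero letter
              subst hθ₀
              have hvalθ : c.val ((0:E) :: t) = c.Φ (c.val t) := by rw [c.val_cons]; simp
              have humem : u ∈ ⇑c.Φ '' c.Λ := by
                obtain ⟨g, hg, hgeq⟩ := hγΦ
                refine ⟨g - c.val t, c.hsub hg (c.val_mem hdokt), ?_⟩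
                rw [map_sub, hgeq, hvalθ]
                abel
              have hu' := c.carr_symm hu humem
              obtain ⟨σ', h1, h2, h3, h4⟩ := ih t htlen hdokt hnaft _ hu'
              refine ⟨0 :: σ', ?_, c.naf_cons_zero h2, ?_, ?_⟩
              · rw [c.dok_cons_iff]; exact ⟨Or.inl rfl, h1⟩
              · rw [c.val_cons, h3, map_add, hvalθ]
                simp
              · rw [wt_cons_zero, wt_cons_zero]
                refine le_trans h4 ?_
                gcongr
                by_cases hu0 : u = 0
                · simp [hu0]
                · have h6 : c.Φ.symm u ≠ 0 := by simpa using hu0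
                  simp [h6, hu0]
            · -- θ₀ is a digit and the whole head window gets absorbed
              have hθ₀D : θ₀ ∈ c.Dbul := by
                rcases c.dok_head hdok with h | h
                · exact absurd h hθ₀
                · exact h
              obtain ⟨hvtake, hallz⟩ := c.val_take_head hnaf hθ₀
              have hvalθ : c.val (θ₀ :: t) =
                  θ₀ + (c.Φ ^ c.w) (c.val (t.drop (c.w - 1))) := by
                rw [hsplit, hvtake]
              obtain ⟨g, hgΛ, hgeq⟩ := hγΦ
              have hsmem : θ₀ + u ∈ ⇑c.Φ '' c.Λ := by
                refine ⟨g - (c.Φ ^ (c.w - 1)) (c.val (t.drop (c.w - 1))),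
                  c.hsub hgΛ (c.hphipow _ hT₂Λ), ?_⟩
                rw [map_sub, hgeq, c.pow_pred_apply, hvalθ]
                abel
              have hu0 : u ≠ 0 := by
                rintro rfl
                apply c.hDnot θ₀ hθ₀D
                simpa using hsmem
              have hunot : u ∉ ⇑c.Φ '' c.Λ := by
                rintro ⟨v, hvΛ, hveq⟩
                apply c.hDnot θ₀ hθ₀D
                obtain ⟨y, hy, hyeq⟩ := hsmem
                exact ⟨y - v, c.hsub hy hvΛ, by rw [map_sub, hyeq, hveq]; abel⟩
              have huD : u ∈ c.Dbul := c.carr_digit hu hunot hu0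
              have hwtθ : wt (θ₀ :: t) = 1 + wt (t.drop (c.w - 1)) := by
                rw [wt_cons, if_neg hθ₀]
                congr 1
                rw [wt_take_drop (c.w - 1) t, wt_allzero hallz]
                omega
              have hsnorm : ‖(c.Φ ^ c.w).symm (θ₀ + u)‖ ≤ 2 * c.R := by
                rw [map_add]
                refine le_trans (norm_add_le _ _) ?_
                have h8 := c.digit_norm hθ₀D
                have h9 := c.carr_norm hu
                linarith
              have hP1 : θ₀ + u ∈ ⇑(c.Φ ^ 1) '' c.Λ := by rw [pow_one]; exact hsmem
              obtain ⟨k, hk1, hkw, hPk, hknot⟩ :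
                  ∃ k, 1 ≤ k ∧ k ≤ c.w ∧ (θ₀ + u ∈ ⇑(c.Φ ^ k) '' c.Λ) ∧
                    (k < c.w → θ₀ + u ∉ ⇑(c.Φ ^ (k + 1)) '' c.Λ) := by
                set P : ℕ → Prop := fun k => θ₀ + u ∈ ⇑(c.Φ ^ k) '' c.Λ with hPdef
                refine ⟨Nat.findGreatest P c.w,
                  Nat.le_findGreatest (P := P) c.hw hP1, Nat.findGreatest_le c.w,
                  Nat.findGreatest_spec (P := P) c.hw hP1, fun hlt => ?_⟩
                exact Nat.findGreatest_is_greatest (P := P) (Nat.lt_succ_self _) (by omega)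
              by_cases hkww : k = c.w
              · -- θ₀ + u is divisible by Φ^w
                subst hkww
                have hc₀Λ : (c.Φ ^ c.w).symm (θ₀ + u) ∈ c.Λ := c.memPhiPow_iff.mp hPk
                have hc₀ : c.carr ((c.Φ ^ c.w).symm (θ₀ + u)) := by
                  apply c.carr_of_small hc₀Λ
                  refine le_trans (c.qnorm_pow c.w _) ?_
                  calc c.q ^ c.w * ‖(c.Φ ^ c.w).symm (θ₀ + u)‖
                      ≤ c.q ^ c.w * (2 * c.R) :=
                        mul_le_mul_of_nonneg_left hsnorm (c.qpow_nonneg c.w)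
                  _ ≤ c.q * c.R + 2 * (c.q ^ c.w * c.R) := by
                        nlinarith [mul_nonneg c.hq0 (le_of_lt c.hR)]
                obtain ⟨τ, ht1, ht2, ht3, ht4⟩ :=
                  ih (t.drop (c.w - 1)) hpostlen hdokpost hnafpost _ hc₀
                refine ⟨List.replicate c.w 0 ++ τ,
                  c.dok_append (c.dok_replicate _) ht1, c.naf_replicate _ ht2, ?_, ?_⟩
                · rw [c.val_replicate_append, ht3, map_add]
                  have h10 : (c.Φ ^ c.w) ((c.Φ ^ c.w).symm (θ₀ + u)) = θ₀ + u := by simp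
                  rw [h10, hvalθ]
                  abel
                · rw [wt_append, wt_replicate_zero, Nat.zero_add, hwtθ, if_neg hu0]
                  have h11 := if_le_one ((c.Φ ^ c.w).symm (θ₀ + u))
                  omega
              · -- 1 ≤ k < w : emit a digit after k zeros
                have hkltw : k < c.w := lt_of_le_of_ne hkw hkww
                obtain ⟨g2, hg2Λ, hg2eq⟩ := hPk
                have hg2not : g2 ∉ ⇑c.Φ '' c.Λ := by
                  rintro ⟨y, hy, rfl⟩
                  exact hknot hkltw ⟨y, hy, by rw [c.pow_succ_apply, hg2eq]⟩
                have hpowTk : ∀ x : E, c.Φ ((c.Φ ^ (c.w - k - 1)) x) = (c.Φ ^ (c.w - k)) x := by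
                  intro x
                  conv_rhs => rw [show c.w - k = (c.w - k - 1) + 1 from by omega]
                  rw [c.pow_succ_apply']
                have hBΛ : g2 + (c.Φ ^ (c.w - k)) (c.val (t.drop (c.w - 1))) ∈ c.Λ :=
                  c.hadd hg2Λ (c.hphipow _ hT₂Λ)
                have hBnot : g2 + (c.Φ ^ (c.w - k)) (c.val (t.drop (c.w - 1))) ∉ ⇑c.Φ '' c.Λ := by
                  rintro ⟨y, hy, hyeq⟩
                  apply hg2not
                  refine ⟨y - (c.Φ ^ (c.w - k - 1)) (c.val (t.drop (c.w - 1))),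
                    c.hsub hy (c.hphipow _ hT₂Λ), ?_⟩
                  rw [map_sub, hyeq, hpowTk]
                  abel
                obtain ⟨δ, ⟨hδD, RR, hRRΛ, hRReq⟩, huniq⟩ := c.hDrep _ hBΛ hBnot
                obtain ⟨c', hc'def⟩ :
                    ∃ c', c' = (c.Φ ^ k) RR - c.val (t.drop (c.w - 1)) := ⟨_, rfl⟩
                have hc'Λ : c' ∈ c.Λ := hc'def ▸ c.hsub (c.hphipow k hRRΛ) hT₂Λ
                have hkey : (c.Φ ^ (c.w - k)) c' = g2 - δ := by
                  rw [hc'def, map_sub, ← c.pow_add_apply (c.w - k) k]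
                  rw [show c.w - k + k = c.w from by omega, hRReq]
                  abel
                have hc'eq : c' = (c.Φ ^ (c.w - k)).symm (g2 - δ) := by
                  rw [← hkey]; simp
                have hg2symm : g2 = (c.Φ ^ k).symm (θ₀ + u) := by rw [← hg2eq]; simp
                have e1 : (c.Φ ^ (c.w - k)).symm g2 = (c.Φ ^ c.w).symm (θ₀ + u) := by
                  rw [hg2symm, ← c.symm_pow_add_apply,
                    show c.w - k + k = c.w from by omega]
                have e2 : (c.Φ ^ c.w).symm ((c.Φ ^ (c.w - k)).symm δ) =
                    (c.Φ ^ (c.w - k)).symm ((c.Φ ^ c.w).symm δ) := by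
                  rw [← c.symm_pow_add_apply, ← c.symm_pow_add_apply, Nat.add_comm]
                have hnorm : ‖(c.Φ ^ c.w).symm c'‖ ≤ c.q * c.R + 2 * (c.q ^ c.w * c.R) := by
                  rw [hc'eq, map_sub, map_sub]
                  refine le_trans (norm_sub_le _ _) ?_
                  have hterm1 : ‖(c.Φ ^ c.w).symm ((c.Φ ^ (c.w - k)).symm g2)‖
                      ≤ c.q ^ c.w * (2 * c.R) := by
                    rw [e1]
                    exact le_trans (c.qnorm_pow c.w _)
                      (mul_le_mul_of_nonneg_left hsnorm (c.qpow_nonneg c.w))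
                  have hterm2 : ‖(c.Φ ^ c.w).symm ((c.Φ ^ (c.w - k)).symm δ)‖
                      ≤ c.q * c.R := by
                    rw [e2]
                    refine le_trans (c.qnorm_pow (c.w - k) _) ?_
                    have hq1 : c.q ^ (c.w - k) ≤ c.q := by
                      calc c.q ^ (c.w - k) ≤ c.q ^ 1 :=
                        pow_le_pow_of_le_one c.hq0 (le_of_lt c.hq1) (by omega)
                      _ = c.q := pow_one _
                    have hd := c.digit_norm hδD
                    nlinarith [c.qpow_nonneg (c.w - k), c.hq0,
                      norm_nonneg ((c.Φ ^ c.w).symm δ)]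
                  nlinarith [mul_nonneg c.hq0 (le_of_lt c.hR),
                    mul_nonneg (c.qpow_nonneg c.w) (le_of_lt c.hR)]
                have hc' : c.carr c' := c.carr_of_small hc'Λ hnorm
                obtain ⟨τ, ht1, ht2, ht3, ht4⟩ :=
                  ih (t.drop (c.w - 1)) hpostlen hdokpost hnafpost _ hc'
                have hvalτ : c.val τ = (c.Φ ^ k) RR := by
                  rw [ht3, hc'def]; abel
                have hτmem : c.val τ ∈ ⇑(c.Φ ^ k) '' c.Λ := ⟨RR, hRRΛ, hvalτ.symm⟩
                obtain ⟨f1, f2, f3⟩ := c.dropz k ht1 hτmem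
                have hvalτ' : c.val (τ.drop k) = RR := by rw [f1, hvalτ]; simp
                refine ⟨List.replicate k 0 ++
                    (δ :: (List.replicate (c.w - 1) 0 ++ τ.drop k)), ?_, ?_, ?_, ?_⟩
                · refine c.dok_append (c.dok_replicate _) ?_
                  rw [c.dok_cons_iff]
                  exact ⟨Or.inr hδD, c.dok_append (c.dok_replicate _) f3⟩
                · exact c.naf_replicate _ (c.naf_emit δ (c.naf_drop k ht2))
                · rw [c.val_replicate_append, c.val_cons, c.val_replicate_append, hvalτ',
                    c.pow_pred_apply, hRReq]
                  have hfin : (c.Φ ^ k) (g2 + (c.Φ ^ (c.w - k)) (c.val (t.drop (c.w - 1))))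
                      = θ₀ + u + (c.Φ ^ c.w) (c.val (t.drop (c.w - 1))) := by
                    rw [map_add, ← c.pow_add_apply k (c.w - k),
                      show k + (c.w - k) = c.w from by omega]
                    rw [hg2eq]
                  calc (c.Φ ^ k) (δ + (g2 + (c.Φ ^ (c.w - k)) (c.val (t.drop (c.w - 1))) - δ))
                      = (c.Φ ^ k) (g2 + (c.Φ ^ (c.w - k)) (c.val (t.drop (c.w - 1)))) := by
                        congr 1; abel
                  _ = θ₀ + u + (c.Φ ^ c.w) (c.val (t.drop (c.w - 1))) := hfin
                  _ = c.val (θ₀ :: t) + u := by rw [hvalθ]; abel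
                · rw [wt_append, wt_replicate_zero, Nat.zero_add, wt_cons,
                    if_neg (c.digit_ne_zero hδD), wt_append, wt_replicate_zero,
                    Nat.zero_add, f2, hwtθ, if_neg hu0]
                  have h11 := if_le_one c'
                  omega
          · -- emission case
            obtain ⟨δ, ⟨hδD, zγ, hzΛ, hzeq⟩, huniq⟩ := c.hDrep _ hγΛ hγΦ
            have hwtθ2 : wt (θ₀ :: t) =
                wt ((θ₀ :: t).take c.w) + wt (t.drop (c.w - 1)) := by
              rw [wt_take_drop c.w (θ₀ :: t), hdrop]
            rcases c.naf_take_w hnaf with hall | ⟨i, hiw, hi0, hzero, hvtake⟩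
            · -- the whole first window is zero, so u must be the emitted digit
              have hvtake0 : c.val ((θ₀ :: t).take c.w) = 0 := by
                apply c.val_zero_of_getD
                intro j
                rw [getD_take]
                split_ifs with h
                · exact hall j h
                · rfl
              have hvalθ : c.val (θ₀ :: t) = (c.Φ ^ c.w) (c.val (t.drop (c.w - 1))) := by
                rw [hsplit, hvtake0, zero_add]
              have hunot : u ∉ ⇑c.Φ '' c.Λ := by
                rintro ⟨v, hvΛ, hveq⟩
                apply hγΦ
                refine ⟨(c.Φ ^ (c.w - 1)) (c.val (t.drop (c.w - 1))) + v,
                  c.hadd (c.hphipow _ hT₂Λ) hvΛ, ?_⟩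
                rw [map_add, c.pow_pred_apply, hveq, hvalθ]
              have hu0 : u ≠ 0 := by
                rintro rfl
                apply hγΦ
                refine ⟨(c.Φ ^ (c.w - 1)) (c.val (t.drop (c.w - 1))), c.hphipow _ hT₂Λ, ?_⟩
                rw [c.pow_pred_apply, hvalθ, add_zero]
              have huD : u ∈ c.Dbul := c.carr_digit hu hunot hu0
              have hδu : u = δ := by
                apply huniq
                refine ⟨huD, c.val (t.drop (c.w - 1)), hT₂Λ, ?_⟩
                rw [hvalθ]
                abel
              refine ⟨u :: (List.replicate (c.w - 1) 0 ++ t.drop (c.w - 1)), ?_, ?_, ?_, ?_⟩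
              · rw [c.dok_cons_iff]
                exact ⟨Or.inr huD, c.dok_append (c.dok_replicate _) hdokpost⟩
              · exact c.naf_emit u hnafpost
              · rw [c.val_cons, c.val_replicate_append, c.pow_pred_apply, hvalθ]
                abel
              · have hwtake0 : wt ((θ₀ :: t).take c.w) = 0 := by
                  refine wt_allzero (allzero_of_getD ?_)
                  intro j
                  rw [getD_take]
                  split_ifs with h
                  · exact hall j h
                  · rfl
                rw [wt_cons, if_neg hu0, wt_append, wt_replicate_zero, Nat.zero_add,
                  hwtθ2, hwtake0]
                omega
            · -- exactly one nonzero letter in the window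
              have hpD : (θ₀ :: t).getD i 0 ∈ c.Dbul := by
                rcases c.dok_getD hdok i with h | h
                · exact absurd h hi0
                · exact h
              have hpΛ : (θ₀ :: t).getD i 0 ∈ c.Λ := c.hDL hpD
              have hvalθ : c.val (θ₀ :: t) =
                  (c.Φ ^ i) ((θ₀ :: t).getD i 0) + (c.Φ ^ c.w) (c.val (t.drop (c.w - 1))) := by
                rw [hsplit, hvtake]
              have hwttake : 1 ≤ wt ((θ₀ :: t).take c.w) := by
                apply one_le_wt_of_getD (i := i)
                rw [getD_take, if_pos hiw]
                exact hi0
              by_cases hu0 : u = 0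
              · -- the nonzero letter must be at position 0 and is the NAF digit
                have hii : i = 0 := by
                  by_contra hii
                  apply hγΦ
                  have hi1 : ∀ x : E, c.Φ ((c.Φ ^ (i - 1)) x) = (c.Φ ^ i) x := by
                    intro x
                    conv_rhs => rw [show i = (i - 1) + 1 from by omega]
                    rw [c.pow_succ_apply']
                  refine ⟨(c.Φ ^ (i - 1)) ((θ₀ :: t).getD i 0) +
                    (c.Φ ^ (c.w - 1)) (c.val (t.drop (c.w - 1))),
                    c.hadd (c.hphipow _ hpΛ) (c.hphipow _ hT₂Λ), ?_⟩
                  rw [map_add, hi1 _, c.pow_pred_apply, hvalθ, hu0, add_zero]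
                subst hii
                have hp0 : (θ₀ :: t).getD 0 0 = θ₀ := rfl
                rw [hp0] at hpD hi0 hvalθ
                have hδp : θ₀ = δ := by
                  apply huniq
                  refine ⟨hpD, c.val (t.drop (c.w - 1)), hT₂Λ, ?_⟩
                  rw [hvalθ, hu0]
                  simp
                refine ⟨θ₀ :: (List.replicate (c.w - 1) 0 ++ t.drop (c.w - 1)), ?_, ?_, ?_, ?_⟩
                · rw [c.dok_cons_iff]
                  exact ⟨Or.inr hpD, c.dok_append (c.dok_replicate _) hdokpost⟩
                · exact c.naf_emit θ₀ hnafpost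
                · rw [c.val_cons, c.val_replicate_append, c.pow_pred_apply, hvalθ, hu0]
                  simp
                · rw [wt_cons, if_neg hi0, wt_append, wt_replicate_zero, Nat.zero_add,
                    hwtθ2, if_pos hu0]
                  omega
              · -- general emission with a new small carry
                have hu''Λ : zγ - c.val (t.drop (c.w - 1)) ∈ c.Λ := c.hsub hzΛ hT₂Λ
                have hueq : (c.Φ ^ c.w) (zγ - c.val (t.drop (c.w - 1))) =
                    u + (c.Φ ^ i) ((θ₀ :: t).getD i 0) - δ := by
                  rw [map_sub, hzeq, hvalθ]
                  abel
                have hu''sym : zγ - c.val (t.drop (c.w - 1)) =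
                    (c.Φ ^ c.w).symm (u + (c.Φ ^ i) ((θ₀ :: t).getD i 0) - δ) := by
                  rw [← hueq]; simp
                have hmid : (c.Φ ^ c.w).symm ((c.Φ ^ i) ((θ₀ :: t).getD i 0)) =
                    (c.Φ ^ (c.w - i)).symm ((θ₀ :: t).getD i 0) :=
                  c.symm_pow_cancel (le_of_lt hiw) _
                have hmid2 : (c.Φ ^ c.w).symm ((c.Φ ^ (c.w - i)).symm ((θ₀ :: t).getD i 0)) =
                    (c.Φ ^ (c.w - i)).symm ((c.Φ ^ c.w).symm ((θ₀ :: t).getD i 0)) := by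
                  rw [← c.symm_pow_add_apply, ← c.symm_pow_add_apply, Nat.add_comm]
                have hnorm : ‖(c.Φ ^ c.w).symm (zγ - c.val (t.drop (c.w - 1)))‖ ≤
                    c.q * c.R + 2 * (c.q ^ c.w * c.R) := by
                  rw [hu''sym]
                  simp only [map_add, map_sub, hmid]
                  refine le_trans (norm_sub_le _ _) ?_
                  have ht1 : ‖(c.Φ ^ c.w).symm ((c.Φ ^ c.w).symm u) +
                      (c.Φ ^ c.w).symm ((c.Φ ^ (c.w - i)).symm ((θ₀ :: t).getD i 0))‖ ≤
                      c.q ^ c.w * c.R + c.q * c.R := by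
                    refine le_trans (norm_add_le _ _) ?_
                    have hb1 : ‖(c.Φ ^ c.w).symm ((c.Φ ^ c.w).symm u)‖ ≤ c.q ^ c.w * c.R := by
                      refine le_trans (c.qnorm_pow c.w _) ?_
                      exact mul_le_mul_of_nonneg_left (c.carr_norm hu) (c.qpow_nonneg c.w)
                    have hb2 : ‖(c.Φ ^ c.w).symm ((c.Φ ^ (c.w - i)).symm ((θ₀ :: t).getD i 0))‖ ≤
                        c.q * c.R := by
                      rw [hmid2]
                      refine le_trans (c.qnorm_pow (c.w - i) _) ?_
                      have hqwi : c.q ^ (c.w - i) ≤ c.q := by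
                        calc c.q ^ (c.w - i) ≤ c.q ^ 1 :=
                          pow_le_pow_of_le_one c.hq0 (le_of_lt c.hq1) (by omega)
                        _ = c.q := pow_one _
                      have hd := c.digit_norm hpD
                      nlinarith [c.qpow_nonneg (c.w - i), c.hq0,
                        norm_nonneg ((c.Φ ^ c.w).symm ((θ₀ :: t).getD i 0))]
                    linarith
                  have hb3 : ‖(c.Φ ^ c.w).symm ((c.Φ ^ c.w).symm δ)‖ ≤ c.q ^ c.w * c.R := by
                    refine le_trans (c.qnorm_pow c.w _) ?_
                    exact mul_le_mul_of_nonneg_left (c.digit_norm hδD) (c.qpow_nonneg c.w)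
                  linarith
                have hu'' : c.carr (zγ - c.val (t.drop (c.w - 1))) :=
                  c.carr_of_small hu''Λ hnorm
                obtain ⟨τ, ht1, ht2, ht3, ht4⟩ :=
                  ih (t.drop (c.w - 1)) hpostlen hdokpost hnafpost _ hu''
                refine ⟨δ :: (List.replicate (c.w - 1) 0 ++ τ), ?_, ?_, ?_, ?_⟩
                · rw [c.dok_cons_iff]
                  exact ⟨Or.inr hδD, c.dok_append (c.dok_replicate _) ht1⟩
                · exact c.naf_emit δ ht2
                · rw [c.val_cons, c.val_replicate_append, c.pow_pred_apply, ht3,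
                    show c.val (t.drop (c.w - 1)) + (zγ - c.val (t.drop (c.w - 1))) = zγ
                      from by abel, hzeq]
                  abel
                · rw [wt_cons, if_neg (c.digit_ne_zero hδD), wt_append, wt_replicate_zero,
                    Nat.zero_add, hwtθ2, if_neg hu0]
                  have h11 := if_le_one (zγ - c.val (t.drop (c.w - 1)))
                  omega

/-- Any word can be rewritten as a NAF word of no larger weight. -/
lemma main (ξ : List E) (hdok : c.dok ξ) :
    ∃ σ : List E, c.dok σ ∧ c.naf σ ∧ c.val σ = c.val ξ ∧ wt σ ≤ wt ξ := by
  induction ξ with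
  | nil => exact ⟨[], c.dok_nil, c.naf_nil, rfl, le_refl _⟩
  | cons a l ihl =>
      obtain ⟨σ', h1, h2, h3, h4⟩ := ihl (c.dok_cons hdok)
      rcases c.dok_head hdok with rfl | haD
      · refine ⟨0 :: σ', ?_, c.naf_cons_zero h2, ?_, ?_⟩
        · rw [c.dok_cons_iff]; exact ⟨Or.inl rfl, h1⟩
        · rw [c.val_cons, c.val_cons, h3]
        · rw [wt_cons_zero, wt_cons_zero]; exact h4
      · obtain ⟨σ, g1, g2, g3, g4⟩ := c.carry (σ'.length + 1) (0 :: σ') (by simp)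
          (by rw [c.dok_cons_iff]; exact ⟨Or.inl rfl, h1⟩) (c.naf_cons_zero h2)
          a (c.carr_of_digit haD)
        refine ⟨σ, g1, g2, ?_, ?_⟩
        · rw [g3, c.val_cons, c.val_cons, h3]
          abel
        · refine le_trans g4 ?_
          rw [wt_cons_zero, wt_cons, if_neg (c.digit_ne_zero haD)]
          omega

/-- All NAF words with the same value have the same weight. -/
lemma uniq : ∀ (N : ℕ) (l₁ l₂ : List E), l₁.length + l₂.length ≤ N →
    c.dok l₁ → c.naf l₁ → c.dok l₂ → c.naf l₂ → c.val l₁ = c.val l₂ →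
    wt l₁ = wt l₂ := by
  intro N
  induction N with
  | zero =>
      intro l₁ l₂ hlen _ _ _ _ _
      have h1 : l₁ = [] := List.length_eq_zero_iff.mp (by omega)
      have h2 : l₂ = [] := List.length_eq_zero_iff.mp (by omega)
      rw [h1, h2]
  | succ N ih =>
      intro l₁ l₂ hlen h1d h1n h2d h2n hval
      by_cases hnil : l₁ = [] ∧ l₂ = []
      · rw [hnil.1, hnil.2]
      by_cases hΦ : c.val l₁ ∈ ⇑c.Φ '' c.Λ
      · -- both heads are zero; recurse on tails
        have hΦ2 : c.val l₂ ∈ ⇑c.Φ '' c.Λ := hval ▸ hΦ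
        have hm1 : c.val l₁ ∈ ⇑(c.Φ ^ 1) '' c.Λ := by rw [pow_one]; exact hΦ
        have hm2 : c.val l₂ ∈ ⇑(c.Φ ^ 1) '' c.Λ := by rw [pow_one]; exact hΦ2
        obtain ⟨e1, e2, e3⟩ := c.dropz 1 h1d hm1
        obtain ⟨f1, f2, f3⟩ := c.dropz 1 h2d hm2
        have hlen2 : (l₁.drop 1).length + (l₂.drop 1).length ≤ N := by
          rw [List.length_drop, List.length_drop]
          rcases not_and_or.mp hnil with h | h
          · have : 0 < l₁.length := List.length_pos_iff.mpr h
            omega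
          · have : 0 < l₂.length := List.length_pos_iff.mpr h
            omega
        have := ih (l₁.drop 1) (l₂.drop 1) hlen2 e3 (c.naf_drop 1 h1n) f3
          (c.naf_drop 1 h2n) (by rw [e1, f1, hval])
        rw [← e2, ← f2]; exact this
      · -- both lists start with the same digit
        have hval1Λ : c.val l₁ ∈ c.Λ := c.val_mem h1d
        cases l₁ with
        | nil =>
            exfalso
            exact (by simpa using hΦ : (0:E) ∉ ⇑c.Φ '' c.Λ) ⟨0, c.hz, by simp⟩
        | cons a₁ t₁ =>
        cases l₂ with
        | nil =>
            exfalso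
            rw [hval] at hΦ
            exact (by simpa using hΦ : (0:E) ∉ ⇑c.Φ '' c.Λ) ⟨0, c.hz, by simp⟩
        | cons a₂ t₂ =>
            have ha₁ : a₁ ≠ 0 := by
              rintro rfl
              apply hΦ
              exact ⟨c.val t₁, c.val_mem (c.dok_cons h1d), by rw [c.val_cons]; simp⟩
            have ha₂ : a₂ ≠ 0 := by
              rintro rfl
              apply hΦ
              rw [hval]
              exact ⟨c.val t₂, c.val_mem (c.dok_cons h2d), by rw [c.val_cons]; simp⟩
            have ha₁D : a₁ ∈ c.Dbul := by
              rcases c.dok_head h1d with h | h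
              · exact absurd h ha₁
              · exact h
            have ha₂D : a₂ ∈ c.Dbul := by
              rcases c.dok_head h2d with h | h
              · exact absurd h ha₂
              · exact h
            obtain ⟨hv1, hz1⟩ := c.val_take_head h1n ha₁
            obtain ⟨hv2, hz2⟩ := c.val_take_head h2n ha₂
            have hd1 : (a₁ :: t₁).drop c.w = t₁.drop (c.w - 1) := by
              conv_lhs => rw [show c.w = (c.w - 1) + 1 from by have := c.hw; omega]
              exact List.drop_succ_cons
            have hd2 : (a₂ :: t₂).drop c.w = t₂.drop (c.w - 1) := by
              conv_lhs => rw [show c.w = (c.w - 1) + 1 from by have := c.hw; omega]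
              exact List.drop_succ_cons
            have hsp1 : c.val (a₁ :: t₁) = a₁ + (c.Φ ^ c.w) (c.val (t₁.drop (c.w - 1))) := by
              conv_lhs => rw [c.val_split c.w (a₁ :: t₁)]
              rw [hd1, hv1]
            have hsp2 : c.val (a₂ :: t₂) = a₂ + (c.Φ ^ c.w) (c.val (t₂.drop (c.w - 1))) := by
              conv_lhs => rw [c.val_split c.w (a₂ :: t₂)]
              rw [hd2, hv2]
            obtain ⟨δ, -, huniq⟩ := c.hDrep _ hval1Λ hΦ
            have he1 : a₁ = δ := by
              apply huniq
              refine ⟨ha₁D, c.val (t₁.drop (c.w - 1)), c.val_mem (c.dok_drop _ (c.dok_cons h1d)), ?_⟩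
              rw [hsp1]; abel
            have he2 : a₂ = δ := by
              apply huniq
              refine ⟨ha₂D, c.val (t₂.drop (c.w - 1)), c.val_mem (c.dok_drop _ (c.dok_cons h2d)), ?_⟩
              rw [hval, hsp2]; abel
            have haa : a₁ = a₂ := by rw [he1, he2]
            have hTT : c.val (t₁.drop (c.w - 1)) = c.val (t₂.drop (c.w - 1)) := by
              apply (c.Φ ^ c.w).injective
              have := hval
              rw [hsp1, hsp2, haa] at this
              exact add_left_cancel this
            have hlen3 : (t₁.drop (c.w - 1)).length + (t₂.drop (c.w - 1)).length ≤ N := by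
              have e1 : (t₁.drop (c.w - 1)).length ≤ t₁.length := by
                rw [List.length_drop]; omega
              have e2 : (t₂.drop (c.w - 1)).length ≤ t₂.length := by
                rw [List.length_drop]; omega
              simp only [List.length_cons] at hlen
              omega
            have hrec := ih _ _ hlen3 (c.dok_drop _ (c.dok_cons h1d))
              (c.naf_drop _ (c.naf_tail h1n)) (c.dok_drop _ (c.dok_cons h2d))
              (c.naf_drop _ (c.naf_tail h2n)) hTT
            have hw1 : wt (a₁ :: t₁) = 1 + wt (t₁.drop (c.w - 1)) := by
              rw [wt_cons, if_neg ha₁]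
              congr 1
              rw [wt_take_drop (c.w - 1) t₁, wt_allzero hz1]
              omega
            have hw2 : wt (a₂ :: t₂) = 1 + wt (t₂.drop (c.w - 1)) := by
              rw [wt_cons, if_neg ha₂]
              congr 1
              rw [wt_take_drop (c.w - 1) t₂, wt_allzero hz2]
              omega
            rw [hw1, hw2, hrec]

/-! ### conversion to `Fin`-indexed words -/

lemma val_ofFn (ℓ : ℕ) (f : Fin ℓ → E) :
    c.val (List.ofFn f) = ∑ j : Fin ℓ, (c.Φ ^ (j : ℕ)) (f j) := by
  induction ℓ with
  | zero => simp
  | succ n ihn =>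
      rw [List.ofFn_succ, c.val_cons, ihn, Fin.sum_univ_succ, map_sum]
      have h0 : (c.Φ ^ ((0 : Fin (n+1)) : ℕ)) (f 0) = f 0 := by simp
      rw [h0]
      congr 1
      apply Finset.sum_congr rfl
      intro j _
      rw [Fin.val_succ, c.pow_succ_apply']

lemma wt_ofFn (ℓ : ℕ) (f : Fin ℓ → E) :
    wt (List.ofFn f) = (Finset.univ.filter (fun j : Fin ℓ => f j ≠ 0)).card := by
  induction ℓ with
  | zero => simp [wt]
  | succ n ihn =>
      rw [List.ofFn_succ, wt_cons, ihn, Finset.card_filter, Finset.card_filter,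
        Fin.sum_univ_succ]
      congr 1
      by_cases h : f 0 = 0 <;> simp [h]

lemma dok_ofFn (ℓ : ℕ) (f : Fin ℓ → E) (h : ∀ j, f j ∈ insert (0 : E) c.Dbul) :
    c.dok (List.ofFn f) := by
  intro a ha
  obtain ⟨j, rfl⟩ := List.mem_ofFn.mp ha
  simpa [Set.mem_insert_iff] using h j

lemma naf_ofFn (ℓ : ℕ) (f : Fin ℓ → E)
    (h : ∀ i j : Fin ℓ, (i : ℕ) < (j : ℕ) → (j : ℕ) < (i : ℕ) + c.w → f i ≠ 0 → f j = 0) :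
    c.naf (List.ofFn f) := by
  intro i k hk hkw htrig
  rw [getD_ofFn] at htrig ⊢
  split_ifs with h2
  · rcases Nat.lt_or_ge i ℓ with h1 | h1
    · rw [dif_pos h1] at htrig
      exact h ⟨i, h1⟩ ⟨i + k, h2⟩ (by simpa using by omega) (by simpa using by omega) htrig
    · rw [dif_neg (by omega)] at htrig
      exact absurd rfl htrig
  · rfl

end Ctx
end WnafAux

open WnafAux

/-- Theorem 6.5: under the tiling and norm conditions, if the tiling-based
digit set `D` is a `w`-NADS, then the `D`-`w`-NAF expansion of each lattice
element is optimal, i.e. its Hamming weight is minimal among all expansions of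
the same element over the digit set `D`. -/
theorem wnaf_optimality
    {E : Type*} [NormedAddCommGroup E] [NormedSpace ℝ E] [FiniteDimensional ℝ E]
    {n : ℕ} (b : Module.Basis (Fin n) ℝ E)
    (Λ : Set E) (hΛ : Λ = ↑(Submodule.span ℤ (Set.range ⇑b)))
    (Φ : E ≃ₗ[ℝ] E) (hΦΛ : ∀ x ∈ Λ, Φ x ∈ Λ)
    (hexp : ∀ lam : ℂ,
      (Polynomial.map (algebraMap ℝ ℂ) (LinearMap.charpoly (Φ : E →ₗ[ℝ] E))).IsRoot lam →
      1 < ‖lam‖)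
    (V : Set E)
    (hVcover : ∀ x : E, ∃ z ∈ Λ, x - z ∈ V)
    (hVdisj : ∀ z ∈ Λ, z ≠ 0 → ∀ x ∈ V, x - z ∈ V → x ∈ frontier V)
    (hVΦ : V ⊆ ⇑Φ '' V) (hVsymm : V = -V)
    (q : ℝ) (hq : q = ‖LinearMap.toContinuousLinearMap (Φ.symm : E →ₗ[ℝ] E)‖)
    (r R : ℝ) (hr : 0 < r) (hR : 0 < R)
    (hrV : {x : E | ‖x‖ ≤ r} ⊆ V) (hVR : V ⊆ {x : E | ‖x‖ ≤ R})
    (hqrR : q < r / R)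
    (w : ℕ) (hw : 1 ≤ w)
    (hbound : q ^ w < 1 / 2 * (r / R - q))
    (Dbul : Set E)
    (hDV : Dbul ⊆ {α ∈ Λ | (Φ ^ w).symm α ∈ V})
    (hDnot : ∀ δ ∈ Dbul, δ ∉ ⇑Φ '' Λ)
    (hDrep : ∀ α ∈ Λ, α ∉ ⇑Φ '' Λ →
      ∃! δ, δ ∈ Dbul ∧ α - δ ∈ ⇑(Φ ^ w) '' Λ)
    (hNADS : ∀ α ∈ Λ, ∃ (ℓ : ℕ) (η : Fin ℓ → E),
      (∀ j, η j ∈ insert (0 : E) Dbul) ∧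
      (∀ i j : Fin ℓ, (i : ℕ) < (j : ℕ) → (j : ℕ) < (i : ℕ) + w → η i ≠ 0 → η j = 0) ∧
      (∑ j : Fin ℓ, (Φ ^ (j : ℕ)) (η j)) = α) :
    ∀ α ∈ Λ, ∀ (ℓ : ℕ) (η : Fin ℓ → E),
      (∀ j, η j ∈ insert (0 : E) Dbul) →
      (∀ i j : Fin ℓ, (i : ℕ) < (j : ℕ) → (j : ℕ) < (i : ℕ) + w → η i ≠ 0 → η j = 0) →
      (∑ j : Fin ℓ, (Φ ^ (j : ℕ)) (η j)) = α →
      ∀ (ℓ' : ℕ) (ξ : Fin ℓ' → E),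
        (∀ j, ξ j ∈ insert (0 : E) Dbul) →
        (∑ j : Fin ℓ', (Φ ^ (j : ℕ)) (ξ j)) = α →
        (Finset.univ.filter (fun j : Fin ℓ => η j ≠ 0)).card ≤
          (Finset.univ.filter (fun j : Fin ℓ' => ξ j ≠ 0)).card := by
  intro α hα ℓ η hηd hηn hηv ℓ' ξ hξd hξv
  rcases subsingleton_or_nontrivial E with hE | hE
  · have hzero : ∀ j : Fin ℓ, ¬ (η j ≠ 0) := fun j h => h (Subsingleton.elim _ _)
    rw [Finset.filter_false_of_mem (fun j _ => hzero j)]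
    simp
  · -- assemble the context
    have hq0 : 0 ≤ q := hq ▸ norm_nonneg _
    have hqn : ∀ x : E, ‖Φ.symm x‖ ≤ q * ‖x‖ := fun x => by
      rw [hq]
      simpa using (LinearMap.toContinuousLinearMap (Φ.symm : E →ₗ[ℝ] E)).le_opNorm x
    have hrR : r ≤ R := by
      obtain ⟨v, hv⟩ := exists_ne (0 : E)
      have hvn : (0:ℝ) < ‖v‖ := norm_pos_iff.mpr hv
      have hx : ‖(r / ‖v‖) • v‖ = r := by
        rw [norm_smul, Real.norm_eq_abs, abs_of_pos (by positivity)]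
        field_simp
      have hmem : (r / ‖v‖) • v ∈ V := hrV (by rw [Set.mem_setOf_eq, hx])
      have := hVR hmem
      rwa [Set.mem_setOf_eq, hx] at this
    have hsep : ∃ ε > 0, ∀ x ∈ Λ, x ≠ 0 → ε ≤ ‖x‖ := by
      have hopen : IsOpen ({0} : Set (Submodule.span ℤ (Set.range ⇑b))) :=
        isOpen_discrete _
      rw [Metric.isOpen_iff] at hopen
      obtain ⟨ε, hε, hball⟩ := hopen 0 rfl
      refine ⟨ε, hε, fun x hx hx0 => ?_⟩
      by_contra hlt
      push_neg at hlt
      have hxm : x ∈ Submodule.span ℤ (Set.range ⇑b) := by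
        rw [hΛ] at hx
        exact hx
      have hmem : (⟨x, hxm⟩ : Submodule.span ℤ (Set.range ⇑b)) ∈ Metric.ball 0 ε := by
        rw [Metric.mem_ball, Subtype.dist_eq]
        simpa [dist_eq_norm] using hlt
      have := hball hmem
      rw [Set.mem_singleton_iff, Subtype.ext_iff] at this
      exact hx0 this
    let c : Ctx E :=
      { Λ := Λ, Φ := Φ, V := V, Dbul := Dbul, q := q, r := r, R := R, w := w,
        hw := hw, hr := hr, hrR := hrR, hq0 := hq0, hqrR := hqrR, hbound := hbound,
        hqn := hqn,
        hz := by rw [hΛ]; exact Submodule.zero_mem _,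
        hadd := by
          intro x y hx hy
          rw [hΛ] at hx hy ⊢
          exact Submodule.add_mem _ hx hy,
        hneg := by
          intro x hx
          rw [hΛ] at hx ⊢
          exact Submodule.neg_mem _ hx,
        hphi := fun hx => hΦΛ _ hx,
        hsep := hsep, hrV := hrV, hVR := hVR, hVPhi := hVΦ, hVdisj := hVdisj,
        hDL := fun δ hδ => (hDV hδ).1,
        hDV := fun δ hδ => (hDV hδ).2,
        hDnot := hDnot, hDrep := hDrep }
    have hηdok : c.dok (List.ofFn η) := c.dok_ofFn ℓ η hηd
    have hηnaf : c.naf (List.ofFn η) := c.naf_ofFn ℓ η hηn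
    have hξdok : c.dok (List.ofFn ξ) := c.dok_ofFn ℓ' ξ hξd
    obtain ⟨σ, hs1, hs2, hs3, hs4⟩ := c.main (List.ofFn ξ) hξdok
    have hvals : c.val (List.ofFn η) = c.val σ := by
      rw [hs3, c.val_ofFn, c.val_ofFn, hηv, hξv]
    have huq := c.uniq ((List.ofFn η).length + σ.length) (List.ofFn η) σ (le_refl _)
      hηdok hηnaf hs1 hs2 hvals
    calc (Finset.univ.filter (fun j : Fin ℓ => η j ≠ 0)).card
        = wt (List.ofFn η) := (Ctx.wt_ofFn ℓ η).symm
    _ = wt σ := huq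
    _ ≤ wt (List.ofFn ξ) := hs4
    _ = (Finset.univ.filter (fun j : Fin ℓ' => ξ j ≠ 0)).card := Ctx.wt_ofFn ℓ' ξ
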